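/- Let ε ∈ (0,1), N ≥ 1, and let M be the N×N circulant matrix with entries M_{i,j} = (ε^{d} + ε^{N-d})/(1-ε) where d = (j - i) mod N. Then the eigenvalues of M are λ_k = ((1-ε^N)/(1-ε)) · (1-ε²)/(1 - 2ε·cos(2πk/N) + ε²) for k = 0,…,N-1. -/

import Mathlib

open Complex

private lemma pow_mod_eq' (N : ℕ) (ω : ℂ) (hω : ω ^ N = 1) (m : ℕ) : ω ^ m = ω ^ (m % N) := by
  conv_lhs => rw [← Nat.mod_add_div m N]
  rw [pow_add, pow_mul, hω, one_pow, mul_one]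

private lemma pow_val_add' (N : ℕ) [NeZero N] (ω : ℂ) (hω : ω ^ N = 1) (a b : ZMod N) (k : ℕ) :
    ω ^ ((a + b).val * k) = ω ^ (a.val * k) * ω ^ (b.val * k) := by
  rw [← pow_add, pow_mod_eq' N ω hω ((a+b).val * k), pow_mod_eq' N ω hω (a.val * k + b.val * k)]
  congr 1
  calc (a + b).val * k % N = (a.val + b.val) % N * k % N := by rw [ZMod.val_add]
    _ = (a.val + b.val) * k % N := Nat.ModEq.mul_right k (Nat.mod_modEq _ N)
    _ = (a.val * k + b.val * k) % N := by rw [add_mul]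

private lemma sum_zmod_eq_sum_range' (N : ℕ) [NeZero N] (g : ℕ → ℂ) :
    ∑ d : ZMod N, g d.val = ∑ m ∈ Finset.range N, g m := by
  refine Finset.sum_nbij' (fun d => d.val) (fun m => (m : ZMod N)) ?_ ?_ ?_ ?_ ?_
  · intro d _; exact Finset.mem_range.mpr (ZMod.val_lt d)
  · intro m _; exact Finset.mem_univ _
  · intro d _; exact ZMod.natCast_rightInverse d
  · intro m hm; exact ZMod.val_cast_of_lt (Finset.mem_range.mp hm)
  · intro d _; rfl

private lemma final_identity' (E e z c : ℂ) (h1 : e*z - 1 ≠ 0) (h2 : e - z ≠ 0)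
    (hone : (1:ℂ) - e ≠ 0) (hD : 1 - 2*e*c + e^2 ≠ 0) (hzc : z^2 + 1 = 2*c*z) :
    ((E - 1)/(e*z - 1) + (E - 1)*e/(e - z))/(1 - e)
      = (1 - E)/(1 - e) * ((1 - e^2)/(1 - 2*e*c + e^2)) := by
  have h1' : (1:ℂ) - e*z ≠ 0 := by intro h; apply h1; linear_combination -h
  have key : (E - 1)/(e*z - 1) + (E - 1)*e/(e - z)
      = (1 - E)*((1 - e^2)/(1 - 2*e*c + e^2)) := by
    rw [show (E - 1)/(e*z - 1) = (1 - E)/(1 - e*z) by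
      rw [div_eq_div_iff h1 h1']; ring]
    rw [div_add_div _ _ h1' h2, mul_div_assoc', div_eq_div_iff (mul_ne_zero h1' h2) hD]
    linear_combination (e*(1-e^2)*(E-1)) * hzc
  rw [key]
  ring

private lemma second_geom' (N : ℕ) (e z : ℂ) (he : e ≠ 0) (hE : e ^ N ≠ 0) (h2 : e - z ≠ 0) :
    e ^ N * ((1 / e ^ N - 1) / (z / e - 1)) = (e ^ N - 1) * e / (e - z) := by
  have hze : z - e ≠ 0 := fun h => h2 (by linear_combination -h)
  rw [div_sub_one hE, div_sub_one he, div_div_div_eq, mul_div_assoc']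
  rw [div_eq_div_iff (mul_ne_zero hE hze) h2]
  ring

open Complex in
theorem circulant_eigenvalues (N : ℕ) [NeZero N] (hN : 1 ≤ N) (ε : ℝ) (hε : 0 < ε) (hε1 : ε < 1)
    (M : Matrix (ZMod N) (ZMod N) ℝ)
    (hM : ∀ i j : ZMod N, M i j = (ε ^ (j - i).val + ε ^ (N - (j - i).val)) / (1 - ε)) :
    ∀ k : ZMod N,
      (M.map (Complex.ofReal)).mulVec
          (fun j : ZMod N => Complex.exp (-2 * Real.pi * Complex.I / N) ^ (j.val * k.val))
        = (((1 - ε ^ N) / (1 - ε) *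
              ((1 - ε ^ 2) / (1 - 2 * ε * Real.cos (2 * Real.pi * k.val / N) + ε ^ 2)) : ℝ) : ℂ) •
            (fun j : ZMod N => Complex.exp (-2 * Real.pi * Complex.I / N) ^ (j.val * k.val)) := by
  intro k
  have hN0 : (N:ℂ) ≠ 0 := Nat.cast_ne_zero.mpr (NeZero.ne N)
  set ω : ℂ := Complex.exp (-2 * Real.pi * Complex.I / N) with hω_def
  have hωN : ω ^ N = 1 := by
    rw [hω_def, ← Complex.exp_nat_mul]
    rw [show (N:ℂ) * (-2 * Real.pi * Complex.I / N) = (-1 : ℤ) * (2 * Real.pi * Complex.I) by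
      field_simp; ring]
    exact Complex.exp_int_mul_two_pi_mul_I (-1)
  have habsω : ‖ω‖ = 1 := by
    rw [hω_def, show (-2 * (Real.pi:ℂ) * Complex.I / N) = ((-2 * Real.pi / N : ℝ) : ℂ) * Complex.I by
      push_cast; ring]
    exact Complex.norm_exp_ofReal_mul_I _
  set z : ℂ := ω ^ k.val with hz_def
  set e : ℂ := (ε : ℂ) with he_def
  set c : ℝ := Real.cos (2 * Real.pi * k.val / N) with hc_def
  have habsz : ‖z‖ = 1 := by rw [hz_def, norm_pow, habsω, one_pow]
  have hzN : z ^ N = 1 := by rw [hz_def, ← pow_mul, mul_comm, pow_mul, hωN, one_pow]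
  have hz0 : z ≠ 0 := fun h => by simp [h] at habsz
  have he0 : e ≠ 0 := by
    rw [he_def]; exact_mod_cast hε.ne'
  have habse : ‖e‖ = ε := by rw [he_def, Complex.norm_real, Real.norm_of_nonneg hε.le]
  have hone : (1 : ℂ) - e ≠ 0 := by
    rw [sub_ne_zero, he_def]
    exact_mod_cast (by linarith : (1:ℝ) ≠ ε)
  have hE : e ^ N ≠ 0 := pow_ne_zero _ he0
  -- z + z⁻¹ = 2 cos
  have h2c : z + z⁻¹ = 2 * (c : ℂ) := by
    have hz_exp : z = Complex.exp (((-(2 * Real.pi * k.val / N) : ℝ) : ℂ) * Complex.I) := by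
      rw [hz_def, hω_def, ← Complex.exp_nat_mul]
      congr 1
      push_cast
      ring
    rw [hz_exp, ← Complex.exp_neg]
    rw [show (((-(2 * Real.pi * k.val / N) : ℝ) : ℂ) * Complex.I) =
        -(((2 * Real.pi * k.val / N : ℝ) : ℂ) * Complex.I) by push_cast; ring]
    rw [neg_neg, hc_def, Complex.ofReal_cos, Complex.cos]
    ring
  have hinv : z * z⁻¹ = 1 := mul_inv_cancel₀ hz0
  have hzc : z ^ 2 + 1 = 2 * (c : ℂ) * z := by linear_combination z * h2c - hinv
  -- nonvanishing of denominators
  have h1 : e * z - 1 ≠ 0 := by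
    rw [sub_ne_zero]
    intro h
    have : ‖e * z‖ = 1 := by rw [h, norm_one]
    rw [norm_mul, habse, habsz, mul_one] at this
    exact absurd this (by linarith)
  have h2 : e - z ≠ 0 := by
    rw [sub_ne_zero]
    intro h
    rw [← h, habse] at habsz
    exact absurd habsz (by linarith)
  have hDpos : 0 < 1 - 2 * ε * c + ε ^ 2 := by
    have h1c : c ≤ 1 := Real.cos_le_one _
    nlinarith [sq_nonneg (1 - ε)]
  have hD : 1 - 2 * e * (c : ℂ) + e ^ 2 ≠ 0 := by
    rw [he_def, show 1 - 2 * (ε:ℂ) * (c:ℂ) + (ε:ℂ) ^ 2 = ((1 - 2 * ε * c + ε ^ 2 : ℝ) : ℂ) by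
      push_cast; ring]
    exact_mod_cast hDpos.ne'
  have hez1 : e * z ≠ 1 := fun h => h1 (by rw [h, sub_self])
  have hze1 : z / e ≠ 1 := by
    intro h
    apply h2
    have : z = e := by field_simp at h; rw [h]
    rw [this, sub_self]
  -- the scalar sum
  have hS : ∑ d : ZMod N, (((ε ^ d.val + ε ^ (N - d.val)) / (1 - ε) : ℝ) : ℂ) * z ^ d.val
      = (((1 - ε ^ N) / (1 - ε) *
          ((1 - ε ^ 2) / (1 - 2 * ε * c + ε ^ 2)) : ℝ) : ℂ) := by
    rw [sum_zmod_eq_sum_range' N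
      (fun m => (((ε ^ m + ε ^ (N - m)) / (1 - ε) : ℝ) : ℂ) * z ^ m)]
    have hterm : ∀ m ∈ Finset.range N,
        (((ε ^ m + ε ^ (N - m)) / (1 - ε) : ℝ) : ℂ) * z ^ m
          = ((e * z) ^ m + e ^ N * (z / e) ^ m) / (1 - e) := by
      intro m hm
      have hmN : m ≤ N := le_of_lt (Finset.mem_range.mp hm)
      have hsub : e ^ (N - m) = e ^ N / e ^ m := pow_sub₀ e he0 hmN
      push_cast
      rw [← he_def, hsub, mul_pow, div_pow]
      field_simp
    rw [Finset.sum_congr rfl hterm]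
    rw [← Finset.sum_div, Finset.sum_add_distrib, ← Finset.mul_sum]
    rw [geom_sum_eq hez1, geom_sum_eq hze1, mul_pow, div_pow, hzN, mul_one]
    rw [second_geom' N e z he0 hE h2]
    push_cast
    rw [← he_def]
    exact final_identity' (e ^ N) e z (c:ℂ) h1 h2 hone hD hzc
  -- finish: pointwise equality
  funext i
  simp only [Matrix.mulVec, dotProduct, Matrix.map_apply, Pi.smul_apply, smul_eq_mul]
  calc ∑ j : ZMod N, (M i j : ℂ) * ω ^ (j.val * k.val)
      = ∑ d : ZMod N, (M i (i + d) : ℂ) * ω ^ ((i + d).val * k.val) :=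
        (Equiv.sum_comp (Equiv.addLeft i) fun j => (M i j : ℂ) * ω ^ (j.val * k.val)).symm
    _ = ∑ d : ZMod N,
          (((ε ^ d.val + ε ^ (N - d.val)) / (1 - ε) : ℝ) : ℂ) * z ^ d.val * ω ^ (i.val * k.val) := by
        refine Finset.sum_congr rfl fun d _ => ?_
        rw [hM, add_sub_cancel_left, pow_val_add' N ω hωN, hz_def, ← pow_mul, mul_comm k.val d.val]
        ring
    _ = (((1 - ε ^ N) / (1 - ε) *
          ((1 - ε ^ 2) / (1 - 2 * ε * c + ε ^ 2)) : ℝ) : ℂ) * ω ^ (i.val * k.val) := by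
        rw [← Finset.sum_mul, hS]
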